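/- arXiv:math/0606256 — 2 statements merged into one kernel-verified Lean document; each statement's English description precedes it below -/
import Mathlib

section
/- Let X be a nonempty complete metric space equipped with a midpoint map m, and assume (X,m) is Busemann non-positively curved and uniformly convex. Let Γ be a group acting on X by isometries with a finite generating set Σ such that d_Σ(x) → ∞ as x → ∞. Then the family of nonempty closed convex Γ-invariant subsets of X has a minimal element with respect to inclusion. -/
/-- `m` is a midpoint map on the metric space `X`. -/
def IsMidpointMap {X : Type*} [MetricSpace X] (m : X → X → X) : Prop :=
  ∀ x y : X, dist x (m x y) = dist x y / 2 ∧ dist y (m x y) = dist x y / 2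

/-- `(X, m)` is Busemann non-positively curved. -/
def IsBNPC {X : Type*} [MetricSpace X] (m : X → X → X) : Prop :=
  ∀ x₁ y₁ x₂ y₂ : X, dist (m x₁ y₁) (m x₂ y₂) ≤ (dist x₁ x₂ + dist y₁ y₂) / 2

/-- `(X, m)` is uniformly convex. -/
def IsUC {X : Type*} [MetricSpace X] (m : X → X → X) : Prop :=
  ∃ δ : ℝ → ℝ, (∀ ε : ℝ, 0 < ε → 0 < δ ε) ∧
    ∀ (ε r : ℝ) (x y₁ y₂ : X), 0 < ε → 0 < r → dist x y₁ ≤ r → dist x y₂ ≤ r →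
      ε * r ≤ dist y₁ y₂ → dist x (m y₁ y₂) ≤ (1 - δ ε) * r

/-- A subset `C` is convex with respect to the midpoint map `m`. -/
def MConvex {X : Type*} [MetricSpace X] (m : X → X → X) (C : Set X) : Prop :=
  ∀ y₁ ∈ C, ∀ y₂ ∈ C, m y₁ y₂ ∈ C

/-- The displacement function `d_Σ(x) = max_{σ ∈ Σ} d(σ·x, x)` (`0` if `Σ = ∅`). -/
noncomputable def displ {Γ X : Type*} [Group Γ] [MetricSpace X] [MulAction Γ X]
    (S : Finset Γ) (x : X) : ℝ :=
  S.fold max 0 fun σ => dist (σ • x) x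

section aux
variable {X : Type*} [MetricSpace X] {m : X → X → X}

lemma mpt_self (hm : IsMidpointMap m) (x : X) : m x x = x := by
  have h := (hm x x).1
  simp only [dist_self, zero_div] at h
  exact (dist_eq_zero.mp h).symm

lemma mpt_dist_le (hm : IsMidpointMap m) (hB : IsBNPC m) (x u v : X) :
    dist x (m u v) ≤ (dist x u + dist x v) / 2 := by
  have := hB x x u v
  rwa [mpt_self hm x] at this

lemma mpt_unique (hm : IsMidpointMap m) (hB : IsBNPC m) (hU : IsUC m)
    {a b z : X} (h1 : dist a z = dist a b / 2) (h2 : dist b z = dist a b / 2) :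
    z = m a b := by
  obtain ⟨δ, hδpos, hδ⟩ := hU
  by_contra hne
  have hd : 0 < dist z (m a b) := dist_pos.mpr hne
  have hmab1 : dist a (m a b) = dist a b / 2 := (hm a b).1
  have hmab2 : dist b (m a b) = dist a b / 2 := (hm a b).2
  set r := dist a b / 2 with hr
  have hrnn : 0 ≤ r := by positivity
  have hrpos : 0 < r := by
    rcases hrnn.lt_or_eq with h | h
    · exact h
    · exfalso
      have hza : a = z := dist_eq_zero.mp (by rw [h1, ← h])
      have hma : a = m a b := dist_eq_zero.mp (by rw [hmab1, ← h])
      exact hne (hza ▸ hma)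
  have hεpos : 0 < dist z (m a b) / r := by positivity
  have hw1 : dist a (m z (m a b)) ≤ (1 - δ (dist z (m a b) / r)) * r := by
    apply hδ _ r a z (m a b) hεpos hrpos (le_of_eq h1) (le_of_eq hmab1)
    rw [div_mul_cancel₀ _ hrpos.ne']
  have hw2 : dist b (m z (m a b)) ≤ (dist b z + dist b (m a b)) / 2 :=
    mpt_dist_le hm hB b z (m a b)
  have hδ0 : 0 < δ (dist z (m a b) / r) := hδpos _ hεpos
  have htri : dist a b ≤ dist a (m z (m a b)) + dist b (m z (m a b)) := by
    rw [dist_comm b]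
    exact dist_triangle a (m z (m a b)) b
  nlinarith [hw1, hw2, htri, hr]

end aux

section displaux
variable {Γ X : Type*} [Group Γ] [MetricSpace X] [MulAction Γ X] {S : Finset Γ}

lemma displ_nonneg (S : Finset Γ) (x : X) : 0 ≤ displ S x :=
  (Finset.le_fold_max _).mpr (Or.inl le_rfl)

lemma dist_le_displ {σ : Γ} (hσ : σ ∈ S) (x : X) : dist (σ • x) x ≤ displ S x :=
  (Finset.le_fold_max _).mpr (Or.inr ⟨σ, hσ, le_rfl⟩)

lemma displ_le {t : ℝ} (ht : 0 ≤ t) {x : X} (h : ∀ σ ∈ S, dist (σ • x) x ≤ t) :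
    displ S x ≤ t := (Finset.fold_max_le _).mpr ⟨ht, h⟩

variable {m : X → X → X}

lemma dist_smul_eq (hiso : ∀ γ : Γ, Isometry fun x : X => γ • x) (γ : Γ) (a b : X) :
    dist (γ • a) (γ • b) = dist a b := (hiso γ).dist_eq a b

lemma smul_mpt (hm : IsMidpointMap m) (hB : IsBNPC m) (hU : IsUC m)
    (hiso : ∀ γ : Γ, Isometry fun x : X => γ • x) (γ : Γ) (a b : X) :
    γ • m a b = m (γ • a) (γ • b) := by
  apply mpt_unique hm hB hU
  · rw [dist_smul_eq hiso, dist_smul_eq hiso]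
    exact (hm a b).1
  · rw [dist_smul_eq hiso, dist_smul_eq hiso]
    exact (hm a b).2

lemma displ_mpt (hm : IsMidpointMap m) (hB : IsBNPC m) (hU : IsUC m)
    (hiso : ∀ γ : Γ, Isometry fun x : X => γ • x) (a b : X) :
    displ S (m a b) ≤ (displ S a + displ S b) / 2 := by
  apply displ_le (by have := displ_nonneg S a; have := displ_nonneg S b; linarith)
  intro σ hσ
  rw [smul_mpt hm hB hU hiso]
  calc dist (m (σ • a) (σ • b)) (m a b) ≤ (dist (σ • a) a + dist (σ • b) b) / 2 :=
        hB (σ • a) (σ • b) a b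
    _ ≤ (displ S a + displ S b) / 2 := by
        have h1 := dist_le_displ hσ a
        have h2 := dist_le_displ hσ b
        linarith

end displaux

lemma core_bound {Γ X : Type*} [Group Γ] [MetricSpace X] [MulAction Γ X]
    {m : X → X → X} (hm : IsMidpointMap m) (hB : IsBNPC m) (hU : IsUC m)
    (hiso : ∀ γ : Γ, Isometry fun x : X => γ • x) (S : Finset Γ)
    (hdisp : Filter.Tendsto (displ S) (Bornology.cobounded X) Filter.atTop) (x0 : X) :
    ∃ R₀ : ℝ, ∀ C : Set X, C.Nonempty → MConvex m C → (∀ γ : Γ, ∀ x ∈ C, γ • x ∈ C) →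
      Metric.infDist x0 C ≤ R₀ := by
  obtain ⟨δ, hδpos, hδ⟩ := hU
  have hU' : IsUC m := ⟨δ, hδpos, hδ⟩
  set t0 := displ S x0 with ht0
  have ht0nn : 0 ≤ t0 := displ_nonneg S x0
  have hfar : ∃ R : ℝ, 0 ≤ R ∧ ∀ x : X, R < dist x0 x → t0 + 2 ≤ displ S x := by
    have hev : ∀ᶠ x in Bornology.cobounded X, t0 + 2 ≤ displ S x :=
      hdisp.eventually (Filter.eventually_ge_atTop (t0 + 2))
    have hbdd : Bornology.IsBounded {x : X | t0 + 2 ≤ displ S x}ᶜ :=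
      Bornology.IsCobounded.compl hev
    obtain ⟨R, hR⟩ := hbdd.subset_closedBall x0
    refine ⟨max R 0, le_max_right _ _, fun x hx => ?_⟩
    by_contra hcon
    have hxmem : x ∈ {x : X | t0 + 2 ≤ displ S x}ᶜ := hcon
    have hball := hR hxmem
    rw [Metric.mem_closedBall, dist_comm] at hball
    have : R < dist x0 x := lt_of_le_of_lt (le_max_left R 0) hx
    linarith
  obtain ⟨R, hRnn, hR⟩ := hfar
  set T := R + 1 with hT
  have hTpos : 0 < T := by linarith
  set ε₀ : ℝ := 1 / (4 * T) with hε₀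
  have hε₀pos : 0 < ε₀ := by positivity
  set δ₀ := δ ε₀ with hδ₀def
  have hδ₀pos : 0 < δ₀ := hδpos _ hε₀pos
  refine ⟨max (max T t0) ((1 + t0) / δ₀), ?_⟩
  intro C hCne hCconv hCinv
  by_contra hcon
  push_neg at hcon
  set r := Metric.infDist x0 C with hrdef
  have hrT : T < r := lt_of_le_of_lt ((le_max_left T t0).trans (le_max_left _ _)) hcon
  have hrt0 : t0 < r := lt_of_le_of_lt ((le_max_right T t0).trans (le_max_left _ _)) hcon
  have hrδdiv : (1 + t0) / δ₀ < r := lt_of_le_of_lt (le_max_right _ _) hcon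
  have hrδ : 1 + t0 < δ₀ * r := by
    rw [div_lt_iff₀ hδ₀pos] at hrδdiv
    linarith [hrδdiv, mul_comm δ₀ r]
  have hrpos : 0 < r := lt_trans hTpos hrT
  obtain ⟨q, hqC, hq⟩ := (Metric.infDist_lt_iff hCne).mp
    (show Metric.infDist x0 C < r + 1 by rw [← hrdef]; linarith)
  set ρ := dist x0 q with hρdef
  have hρ1 : r ≤ ρ := Metric.infDist_le_dist_of_mem hqC
  have hρ2 : ρ < r + 1 := hq
  have hρpos : 0 < ρ := lt_of_lt_of_le hrpos hρ1
  -- the almost-projection has small displacement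
  have hqdispl : displ S q ≤ ε₀ * (ρ + t0) := by
    apply displ_le (by positivity)
    intro σ hσ
    by_contra hbig
    push_neg at hbig
    have hd1 : dist x0 q ≤ ρ + t0 := by rw [← hρdef]; linarith
    have hd2 : dist x0 (σ • q) ≤ ρ + t0 := by
      have hh := dist_le_displ hσ x0
      rw [dist_comm] at hh
      calc dist x0 (σ • q) ≤ dist x0 (σ • x0) + dist (σ • x0) (σ • q) := dist_triangle _ _ _
        _ = dist x0 (σ • x0) + ρ := by rw [dist_smul_eq hiso, ← hρdef]
        _ ≤ ρ + t0 := by linarith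
    have hUC := hδ ε₀ (ρ + t0) x0 q (σ • q) hε₀pos (by linarith) hd1 hd2
      (le_of_lt (by rwa [dist_comm (σ • q) q] at hbig))
    have hmem : m q (σ • q) ∈ C := hCconv q hqC (σ • q) (hCinv σ q hqC)
    have hlow : r ≤ dist x0 (m q (σ • q)) := Metric.infDist_le_dist_of_mem hmem
    have hmul : δ₀ * r ≤ δ₀ * (ρ + t0) :=
      mul_le_mul_of_nonneg_left (by linarith) hδ₀pos.le
    have hexp : (1 - δ₀) * (ρ + t0) = (ρ + t0) - δ₀ * (ρ + t0) := by ring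
    linarith [hUC, hlow, hρ2, hrδ, hmul, hexp]
  -- geodesic walk back toward x0 via iterated midpoints
  have hwd : ∀ k : ℕ, dist x0 ((m x0)^[k] q) = ρ / 2 ^ k := by
    intro k; induction k with
    | zero => simp [hρdef]
    | succ k ih =>
      rw [Function.iterate_succ_apply', (hm x0 _).1, ih]
      ring
  have hwD : ∀ k : ℕ, displ S ((m x0)^[k] q) ≤ t0 + displ S q / 2 ^ k := by
    intro k; induction k with
    | zero => simpa using (by linarith : displ S q ≤ t0 + displ S q)
    | succ k ih =>
      rw [Function.iterate_succ_apply']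
      calc displ S (m x0 ((m x0)^[k] q)) ≤ (displ S x0 + displ S ((m x0)^[k] q)) / 2 :=
            displ_mpt hm hB hU' hiso _ _
        _ ≤ (t0 + (t0 + displ S q / 2 ^ k)) / 2 := by rw [← ht0]; linarith
        _ = t0 + displ S q / 2 ^ (k + 1) := by ring
  -- choose the scale k
  have hρT : (1 : ℝ) ≤ ρ / T := (one_le_div hTpos).mpr (by linarith)
  set n := ⌊ρ / T⌋₊ with hn
  have hn1 : 1 ≤ n := Nat.le_floor (by exact_mod_cast hρT)
  set k := Nat.log 2 n with hk
  have h2k : (2 : ℕ) ^ k ≤ n := Nat.pow_log_le_self 2 (by omega)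
  have hk2 : n < 2 ^ (k + 1) := Nat.lt_pow_succ_log_self (by norm_num) n
  have hpow : (0 : ℝ) < 2 ^ k := by positivity
  have h2kR : (2 : ℝ) ^ k ≤ ρ / T := by
    calc ((2 : ℝ) ^ k) = ((2 ^ k : ℕ) : ℝ) := by push_cast; ring
      _ ≤ (n : ℝ) := by exact_mod_cast h2k
      _ ≤ ρ / T := Nat.floor_le (by positivity)
  have hk2R : ρ / T < 2 * 2 ^ k := by
    have h1 := Nat.lt_floor_add_one (ρ / T)
    have h2 : (n : ℝ) + 1 ≤ 2 * 2 ^ k := by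
      have := Nat.succ_le_of_lt hk2
      calc (n : ℝ) + 1 = ((n + 1 : ℕ) : ℝ) := by push_cast; ring
        _ ≤ ((2 ^ (k + 1) : ℕ) : ℝ) := by exact_mod_cast this
        _ = 2 * 2 ^ k := by push_cast [pow_succ]; ring
    rw [← hn] at h1
    linarith
  have hTle : T ≤ ρ / 2 ^ k := by
    rw [le_div_iff₀ hpow, mul_comm]
    exact (le_div_iff₀ hTpos).mp h2kR
  have hρlt : ρ < 2 * T * 2 ^ k := by
    rw [show 2 * T * 2 ^ k = 2 * 2 ^ k * T by ring]
    exact (div_lt_iff₀ hTpos).mp hk2R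
  -- conclude
  set w := (m x0)^[k] q with hwdef
  have hwdist : T ≤ dist x0 w := by rw [hwdef, hwd k]; exact hTle
  have hfar2 : t0 + 2 ≤ displ S w := hR w (by linarith)
  have hq3 : displ S q ≤ 2 ^ k := by
    calc displ S q ≤ ε₀ * (ρ + t0) := hqdispl
      _ ≤ ε₀ * (2 * ρ) := mul_le_mul_of_nonneg_left (by linarith) hε₀pos.le
      _ ≤ ε₀ * (2 * (2 * T * 2 ^ k)) := mul_le_mul_of_nonneg_left (by linarith) hε₀pos.le
      _ = 2 ^ k := by rw [hε₀]; field_simp; ring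
  have hup : displ S w ≤ t0 + 1 := by
    have h1 := hwD k
    have h2 : displ S q / 2 ^ k ≤ 1 := (div_le_one hpow).mpr hq3
    rw [← hwdef] at h1
    linarith
  linarith

lemma close_points {X : Type*} [MetricSpace X] {m : X → X → X} (hU : IsUC m)
    (x0 : X) (rstar : ℝ) (hrs : 0 ≤ rstar) {ε' : ℝ} (hε' : 0 < ε') :
    ∃ η : ℝ, 0 < η ∧ η ≤ 1 ∧ ∀ A : Set X, MConvex m A →
      rstar - η ≤ Metric.infDist x0 A → ∀ u ∈ A, ∀ v ∈ A,
      dist x0 u ≤ rstar + η → dist x0 v ≤ rstar + η → dist u v ≤ ε' := by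
  obtain ⟨δ, hδpos, hδ⟩ := hU
  by_cases hsmall : rstar ≤ ε' / 4
  · refine ⟨min 1 (ε' / 4), lt_min one_pos (by positivity), min_le_left _ _, ?_⟩
    intro A hA hinf u hu v hv hdu hdv
    have hm4 : min 1 (ε' / 4) ≤ ε' / 4 := min_le_right _ _
    calc dist u v ≤ dist u x0 + dist x0 v := dist_triangle _ _ _
      _ = dist x0 u + dist x0 v := by rw [dist_comm u x0]
      _ ≤ ε' := by linarith
  · push_neg at hsmall
    set ε₁ := ε' / (rstar + 1) with hε₁
    have hε₁pos : 0 < ε₁ := by positivity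
    set δ₁ := δ ε₁ with hδ₁def
    have hδ₁pos : 0 < δ₁ := hδpos _ hε₁pos
    have hrspos : 0 < rstar := lt_trans (by positivity) hsmall
    refine ⟨min 1 (δ₁ * rstar / 4), lt_min one_pos (by positivity), min_le_left _ _, ?_⟩
    intro A hA hinf u hu v hv hdu hdv
    set η := min 1 (δ₁ * rstar / 4) with hη
    have hη1 : η ≤ 1 := min_le_left _ _
    have hη2 : η ≤ δ₁ * rstar / 4 := min_le_right _ _
    have hηpos : 0 < η := lt_min one_pos (by positivity)
    by_contra hbig
    push_neg at hbig
    have hprod : ε₁ * (rstar + 1) = ε' := by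
      rw [hε₁]; field_simp
    have harg : ε₁ * (rstar + η) ≤ dist u v := by
      have h1 : ε₁ * (rstar + η) ≤ ε₁ * (rstar + 1) :=
        mul_le_mul_of_nonneg_left (by linarith) hε₁pos.le
      linarith
    have hUC := hδ ε₁ (rstar + η) x0 u v hε₁pos (by linarith) hdu hdv harg
    have hmem : m u v ∈ A := hA u hu v hv
    have hlow : rstar - η ≤ dist x0 (m u v) :=
      le_trans hinf (Metric.infDist_le_dist_of_mem hmem)
    have hexp : (1 - δ₁) * (rstar + η) = rstar + η - δ₁ * rstar - δ₁ * η := by ring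
    have hδη : 0 < δ₁ * η := mul_pos hδ₁pos hηpos
    linarith [hUC, hlow, hexp, hη2, hδη]

lemma nat_inv_le {η : ℝ} (hη : 0 < η) : ∃ N : ℕ, 1 / ((N : ℝ) + 1) ≤ η := by
  obtain ⟨N, hN⟩ := exists_nat_gt (1 / η)
  refine ⟨N, ?_⟩
  rw [div_le_iff₀ (by positivity)]
  have h2 : 1 < (N : ℝ) * η := by rwa [div_lt_iff₀ hη] at hN
  nlinarith

lemma nat_inv_mono {N a : ℕ} (hna : N ≤ a) : 1 / ((a : ℝ) + 1) ≤ 1 / ((N : ℝ) + 1) := by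
  apply one_div_le_one_div_of_le (by positivity)
  have := (Nat.cast_le (α := ℝ)).mpr hna
  linarith

theorem stmt_9 {X : Type*} [MetricSpace X] [CompleteSpace X] [Nonempty X] (m : X → X → X)
    (hm : IsMidpointMap m) (hB : IsBNPC m) (hU : IsUC m)
    (Γ : Type*) [Group Γ] [MulAction Γ X]
    (hiso : ∀ γ : Γ, Isometry fun x : X => γ • x)
    (S : Finset Γ) (hgen : Subgroup.closure (S : Set Γ) = ⊤)
    (hdisp : Filter.Tendsto (displ S) (Bornology.cobounded X) Filter.atTop) :
    ∃ C : Set X,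
      (C.Nonempty ∧ IsClosed C ∧ MConvex m C ∧ ∀ γ : Γ, ∀ x ∈ C, γ • x ∈ C) ∧
      ∀ C' : Set X,
        (C'.Nonempty ∧ IsClosed C' ∧ MConvex m C' ∧ ∀ γ : Γ, ∀ x ∈ C', γ • x ∈ C') →
        C' ⊆ C → C' = C := by
  classical
  have x0 : X := Classical.arbitrary X
  obtain ⟨R₀, hR₀⟩ := core_bound hm hB hU hiso S hdisp x0
  set F : Set (Set X) :=
    {C | C.Nonempty ∧ IsClosed C ∧ MConvex m C ∧ ∀ γ : Γ, ∀ x ∈ C, γ • x ∈ C} with hF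
  have hzorn : ∀ c ⊆ F, IsChain (· ⊆ ·) c → ∃ lb ∈ F, ∀ s ∈ c, lb ⊆ s := by
    intro c hcF hchain
    by_cases hcne : c.Nonempty
    swap
    · exact ⟨Set.univ, ⟨Set.univ_nonempty, isClosed_univ,
        fun y₁ _ y₂ _ => Set.mem_univ _, fun γ x _ => Set.mem_univ _⟩,
        fun s hs => (hcne ⟨s, hs⟩).elim⟩
    -- main case: chain is nonempty
    have himg_ne : ((fun A => Metric.infDist x0 A) '' c).Nonempty := hcne.image _
    have himg_bdd : BddAbove ((fun A => Metric.infDist x0 A) '' c) := by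
      refine ⟨R₀, ?_⟩
      rintro y ⟨A, hA, rfl⟩
      obtain ⟨hne, _, hconv, hinv⟩ := hcF hA
      exact hR₀ A hne hconv hinv
    set rstar := sSup ((fun A => Metric.infDist x0 A) '' c) with hrstar
    have hrs_nonneg : 0 ≤ rstar := by
      obtain ⟨A, hA⟩ := hcne
      exact le_trans Metric.infDist_nonneg (le_csSup himg_bdd ⟨A, hA, rfl⟩)
    have hle_rstar : ∀ A ∈ c, Metric.infDist x0 A ≤ rstar :=
      fun A hA => le_csSup himg_bdd ⟨A, hA, rfl⟩
    have hex : ∀ k : ℕ, ∃ A ∈ c, rstar - 1 / ((k : ℝ) + 1) < Metric.infDist x0 A := by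
      intro k
      have hpos : (0 : ℝ) < 1 / ((k : ℝ) + 1) := by positivity
      obtain ⟨y, hy, hylt⟩ := exists_lt_of_lt_csSup himg_ne
        (show rstar - 1 / ((k : ℝ) + 1) < rstar by linarith)
      obtain ⟨A, hA, rfl⟩ := hy
      exact ⟨A, hA, hylt⟩
    choose Cs hCs_mem hCs_lt using hex
    set D : ℕ → Set X :=
      fun n => Nat.rec (Cs 0) (fun n Dn => if Cs (n + 1) ⊆ Dn then Cs (n + 1) else Dn) n with hD
    have hDsucc : ∀ n, D (n + 1) = if Cs (n + 1) ⊆ D n then Cs (n + 1) else D n := fun n => rfl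
    have hDmem : ∀ n, D n ∈ c := by
      intro n; induction n with
      | zero => exact hCs_mem 0
      | succ n ih =>
        rw [hDsucc]
        split
        · exact hCs_mem (n + 1)
        · exact ih
    have hDsub : ∀ n, D n ⊆ Cs n := by
      intro n; induction n with
      | zero => exact subset_rfl
      | succ n ih =>
        rw [hDsucc]
        split
        · exact subset_rfl
        · next hno =>
          rcases hchain.total (hDmem n) (hCs_mem (n + 1)) with h | h
          · exact h
          · exact absurd h hno
    have hDanti : ∀ n, D (n + 1) ⊆ D n := by
      intro n
      rw [hDsucc]
      split
      · next h => exact h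
      · exact subset_rfl
    have hDanti' : ∀ {a b : ℕ}, a ≤ b → D b ⊆ D a := by
      intro a b hab
      induction b, hab using Nat.le_induction with
      | base => exact subset_rfl
      | succ n hn ih => exact (hDanti n).trans ih
    have hDne : ∀ n, (D n).Nonempty := fun n => (hcF (hDmem n)).1
    have hDconv : ∀ n, MConvex m (D n) := fun n => (hcF (hDmem n)).2.2.1
    have hDlb : ∀ n : ℕ, rstar - 1 / ((n : ℝ) + 1) < Metric.infDist x0 (D n) := by
      intro n
      exact lt_of_lt_of_le (hCs_lt n)
        (Metric.infDist_le_infDist_of_subset (hDsub n) (hDne n))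
    have hDub : ∀ n, Metric.infDist x0 (D n) ≤ rstar := fun n => hle_rstar _ (hDmem n)
    have hxex : ∀ n : ℕ, ∃ xp ∈ D n,
        dist x0 xp < Metric.infDist x0 (D n) + 1 / ((n : ℝ) + 1) := by
      intro n
      refine (Metric.infDist_lt_iff (hDne n)).mp ?_
      have : (0 : ℝ) < 1 / ((n : ℝ) + 1) := by positivity
      linarith
    choose xs hxs_mem hxs_lt using hxex
    have hxs_ub : ∀ n : ℕ, dist x0 (xs n) ≤ rstar + 1 / ((n : ℝ) + 1) := by
      intro n
      exact le_of_lt (lt_of_lt_of_le (hxs_lt n) (by linarith [hDub n]))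
    -- the approximating points form a Cauchy sequence
    have hcauchy : CauchySeq xs := by
      rw [Metric.cauchySeq_iff]
      intro ε hε
      obtain ⟨η, hηpos, hη1, hηprop⟩ := close_points hU x0 rstar hrs_nonneg
        (show (0 : ℝ) < ε / 2 by linarith)
      obtain ⟨N, hN⟩ := nat_inv_le hηpos
      have key : ∀ a b : ℕ, N ≤ a → a ≤ b → dist (xs a) (xs b) ≤ ε / 2 := by
        intro a b hNa hab
        have hmono := nat_inv_mono hNa
        have hmono2 := nat_inv_mono (hNa.trans hab)
        refine hηprop (D a) (hDconv a) (by linarith [hDlb a]) (xs a) (hxs_mem a)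
          (xs b) (hDanti' hab (hxs_mem b)) (by linarith [hxs_lt a, hDub a]) ?_
        linarith [hxs_ub b]
      refine ⟨N, fun a ha b hb => ?_⟩
      rcases le_total a b with hab | hab
      · exact lt_of_le_of_lt (key a b ha hab) (by linarith)
      · rw [dist_comm]
        exact lt_of_le_of_lt (key b a hb hab) (by linarith)
    obtain ⟨xb, hxb⟩ := cauchySeq_tendsto_of_complete hcauchy
    have hxb_mem : ∀ A ∈ c, xb ∈ A := by
      intro A hA
      by_cases hex2 : ∃ n, D n ⊆ A
      · obtain ⟨n, hn⟩ := hex2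
        exact (hcF hA).2.1.mem_of_tendsto hxb
          (Filter.eventually_atTop.mpr ⟨n, fun p hp => hn (hDanti' hp (hxs_mem p))⟩)
      · push_neg at hex2
        have hAsub : ∀ n, A ⊆ D n := by
          intro n
          rcases hchain.total hA (hDmem n) with h | h
          · exact h
          · exact absurd h (hex2 n)
        rw [← (hcF hA).2.1.closure_eq, Metric.mem_closure_iff]
        intro ε hε
        obtain ⟨η, hηpos, hη1, hηprop⟩ := close_points hU x0 rstar hrs_nonneg
          (show (0 : ℝ) < ε / 3 by linarith)
        obtain ⟨N, hN⟩ := nat_inv_le hηpos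
        have hAne := (hcF hA).1
        obtain ⟨y, hyA, hy⟩ := (Metric.infDist_lt_iff hAne).mp
          (show Metric.infDist x0 A < Metric.infDist x0 A + η by linarith)
        have hyub : dist x0 y ≤ rstar + η := le_of_lt
          (lt_of_lt_of_le hy (by linarith [hle_rstar A hA]))
        obtain ⟨N2, hN2⟩ := (Metric.tendsto_atTop.mp hxb) (ε / 3) (by linarith)
        set n := max N N2 with hns
        have hnN : N ≤ n := le_max_left _ _
        have hmono := nat_inv_mono hnN
        have hdy : dist y (xs n) ≤ ε / 3 := by
          refine hηprop (D n) (hDconv n) (by linarith [hDlb n]) y (hAsub n hyA)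
            (xs n) (hxs_mem n) hyub ?_
          linarith [hxs_ub n]
        have hdn : dist (xs n) xb < ε / 3 := hN2 n (le_max_right _ _)
        refine ⟨y, hyA, ?_⟩
        calc dist xb y ≤ dist xb (xs n) + dist (xs n) y := dist_triangle _ _ _
          _ = dist (xs n) xb + dist y (xs n) := by rw [dist_comm xb (xs n), dist_comm (xs n) y]
          _ < ε := by linarith
    refine ⟨⋂₀ c, ⟨⟨xb, Set.mem_sInter.mpr hxb_mem⟩,
      isClosed_sInter (fun A hA => (hcF hA).2.1), ?_, ?_⟩,
      fun s hs => Set.sInter_subset_of_mem hs⟩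
    · intro y₁ h₁ y₂ h₂
      refine Set.mem_sInter.mpr fun A hA => ?_
      exact (hcF hA).2.2.1 y₁ (Set.mem_sInter.mp h₁ A hA) y₂ (Set.mem_sInter.mp h₂ A hA)
    · intro γ x hx
      refine Set.mem_sInter.mpr fun A hA => ?_
      exact (hcF hA).2.2.2 γ x (Set.mem_sInter.mp hx A hA)
  obtain ⟨C, hmin⟩ := zorn_superset F hzorn
  exact ⟨C, hmin.1, fun C' hC' hsub => subset_antisymm hsub (hmin.2 hC' hsub)⟩
end

section
/- Let X be a complete metric space equipped with a midpoint map m, assume (X,m) is Busemann non-positively curved and weakly uniformly convex, and let a group Γ act on X by isometries. Let C ⊆ X be a nonempty bounded closed convex Γ-invariant subset that is minimal among nonempty closed convex Γ-invariant subsets with respect to inclusion. Then C is a single point; in particular Γ has a global fixed point in X. -/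
/-- `(X, m)` is weakly uniformly convex. -/
def IsWUC {X : Type*} [MetricSpace X] (m : X → X → X) : Prop :=
  ∀ (x : X) (ε r : ℝ), 0 < ε → 0 < r →
    ∃ δ > (0 : ℝ), ∀ y₁ y₂ : X, dist x y₁ ≤ r → dist x y₂ ≤ r → ε * r ≤ dist y₁ y₂ →
      δ ≤ r - dist x (m y₁ y₂)

lemma mid_self {X : Type*} [MetricSpace X] {m : X → X → X} (hm : IsMidpointMap m) (x : X) :
    m x x = x := by
  have h := (hm x x).1
  rw [dist_self, zero_div] at h
  exact (dist_eq_zero.mp h).symm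

lemma bnpc_midpoint_unique {X : Type*} [MetricSpace X] {m : X → X → X}
    (hm : IsMidpointMap m) (hB : IsBNPC m) (hW : IsWUC m)
    {u v p q : X} (hp1 : dist u p = dist u v / 2) (hp2 : dist v p = dist u v / 2)
    (hq1 : dist u q = dist u v / 2) (hq2 : dist v q = dist u v / 2) : p = q := by
  by_contra hpq
  have hd : 0 < dist u v := by
    rcases (dist_nonneg (x := u) (y := v)).eq_or_lt with h | h
    · exfalso
      apply hpq
      have hp : u = p := dist_eq_zero.mp (by rw [hp1, ← h]; ring)
      have hq : u = q := dist_eq_zero.mp (by rw [hq1, ← h]; ring)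
      rw [← hp, ← hq]
    · exact h
  have hr : 0 < dist u v / 2 := by linarith
  have hε : 0 < dist p q / (dist u v / 2) := div_pos (dist_pos.mpr hpq) hr
  obtain ⟨δ, hδpos, hδ⟩ := hW u _ _ hε hr
  have h1 := hδ p q (le_of_eq hp1) (le_of_eq hq1)
    (by rw [div_mul_cancel₀ _ (ne_of_gt hr)])
  have h2 : dist v (m p q) ≤ dist u v / 2 := by
    have h3 := hB v v p q
    rw [mid_self hm v] at h3
    linarith [h3, hp2, hq2]
  have h4 := dist_triangle u (m p q) v
  rw [dist_comm (m p q) v] at h4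
  linarith

theorem stmt_11 {X : Type*} [MetricSpace X] [CompleteSpace X] (m : X → X → X)
    (hm : IsMidpointMap m) (hB : IsBNPC m) (hW : IsWUC m)
    (Γ : Type*) [Group Γ] [MulAction Γ X]
    (hiso : ∀ γ : Γ, Isometry fun x : X => γ • x)
    (C : Set X) (hCne : C.Nonempty) (hCb : Bornology.IsBounded C) (hCcl : IsClosed C)
    (hCconv : MConvex m C) (hCinv : ∀ γ : Γ, ∀ x ∈ C, γ • x ∈ C)
    (hCmin : ∀ C' : Set X,
      (C'.Nonempty ∧ IsClosed C' ∧ MConvex m C' ∧ ∀ γ : Γ, ∀ x ∈ C', γ • x ∈ C') →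
      C' ⊆ C → C' = C) :
    ∃ x : X, C = {x} ∧ ∀ γ : Γ, γ • x = x := by
  obtain ⟨a, haC⟩ := hCne
  obtain ⟨B, hBd⟩ := Metric.isBounded_iff.mp hCb
  have hdistγ : ∀ (γ : Γ) (x y : X), dist (γ • x) (γ • y) = dist x y := fun γ x y =>
    (hiso γ).dist_eq x y
  have hequiv : ∀ (γ : Γ) (x y : X), γ • m x y = m (γ • x) (γ • y) := by
    intro γ x y
    refine bnpc_midpoint_unique hm hB hW (u := γ • x) (v := γ • y) ?_ ?_ ?_ ?_
    · rw [hdistγ, (hm x y).1, hdistγ]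
    · rw [hdistγ, (hm x y).2, hdistγ]
    · exact (hm _ _).1
    · exact (hm _ _).2
  set rad : X → ℝ := fun x => sSup ((fun y => dist x y) '' C) with hraddef
  have hbdd : ∀ x : X, BddAbove ((fun y => dist x y) '' C) := by
    intro x
    refine ⟨dist x a + B, ?_⟩
    rintro _ ⟨y, hy, rfl⟩
    calc dist x y ≤ dist x a + dist a y := dist_triangle x a y
    _ ≤ dist x a + B := by linarith [hBd haC hy]
  have hradge : ∀ x : X, ∀ y ∈ C, dist x y ≤ rad x := fun x y hy =>
    le_csSup (hbdd x) ⟨y, hy, rfl⟩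
  have hradnn : ∀ x : X, 0 ≤ rad x := fun x => le_trans dist_nonneg (hradge x a haC)
  have hradle : ∀ (x : X) (r : ℝ), 0 ≤ r → (∀ y ∈ C, dist x y ≤ r) → rad x ≤ r := by
    intro x r hr h
    exact Real.sSup_le (by rintro _ ⟨y, hy, rfl⟩; exact h y hy) hr
  set R : ℝ := sInf (rad '' C) with hRdef
  have hRbb : BddBelow (rad '' C) := ⟨0, by rintro _ ⟨x, hx, rfl⟩; exact hradnn x⟩
  have hRle : ∀ x ∈ C, R ≤ rad x := fun x hx => csInf_le hRbb ⟨x, hx, rfl⟩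
  have hR0 : 0 ≤ R := le_csInf (Set.Nonempty.image rad ⟨a, haC⟩) (by rintro _ ⟨x, hx, rfl⟩; exact hradnn x)
  -- Step 1: rad is constant R on C
  have hstep1 : ∀ r : ℝ, R < r → ∀ x ∈ C, rad x ≤ r := by
    intro r hr
    obtain ⟨_, ⟨x₀, hx₀, rfl⟩, hx₀r⟩ := exists_lt_of_csInf_lt (Set.Nonempty.image rad ⟨a, haC⟩) hr
    set C₁ : Set X := {x ∈ C | ∀ y ∈ C, dist x y ≤ r} with hC₁def
    have hC₁eq : C₁ = C := by
      refine hCmin C₁ ⟨⟨x₀, hx₀, fun y hy => (hradge x₀ y hy).trans hx₀r.le⟩, ?_, ?_, ?_⟩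
        (Set.sep_subset _ _)
      · have : C₁ = C ∩ ⋂ y ∈ C, {x | dist x y ≤ r} := by
          ext x
          simp only [hC₁def, Set.mem_sep_iff, Set.mem_inter_iff, Set.mem_iInter,
            Set.mem_setOf_eq]
        rw [this]
        exact hCcl.inter (isClosed_biInter fun y _ =>
          isClosed_le (continuous_id.dist continuous_const) continuous_const)
      · rintro y₁ ⟨hy₁C, hy₁⟩ y₂ ⟨hy₂C, hy₂⟩
        refine ⟨hCconv y₁ hy₁C y₂ hy₂C, fun y hy => ?_⟩
        have h3 := hB y₁ y₂ y y
        rw [mid_self hm y] at h3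
        linarith [hy₁ y hy, hy₂ y hy]
      · rintro γ x ⟨hxC, hx⟩
        refine ⟨hCinv γ x hxC, fun y hy => ?_⟩
        have hy' : γ⁻¹ • y ∈ C := hCinv γ⁻¹ y hy
        have : dist (γ • x) y = dist x (γ⁻¹ • y) := by
          conv_lhs => rw [← smul_inv_smul γ y]
          exact hdistγ γ x (γ⁻¹ • y)
        rw [this]
        exact hx _ hy'
    intro x hx
    rw [← hC₁eq] at hx
    exact hradle x r (hR0.trans hr.le) hx.2
  have hradR : ∀ x ∈ C, rad x = R := by
    intro x hx
    refine le_antisymm ?_ (hRle x hx)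
    by_contra h
    push_neg at h
    have := hstep1 ((R + rad x) / 2) (by linarith) x hx
    linarith
  -- Step 2: R = 0
  have hRzero : R = 0 := by
    by_contra hRne
    have hRpos : 0 < R := lt_of_le_of_ne hR0 (Ne.symm hRne)
    obtain ⟨δ, hδpos, hδ⟩ := hW a (1/2) R one_half_pos hRpos
    set C₂ : Set X := {x ∈ C | ∀ y ∈ C, ∀ z ∈ C, R / 2 ≤ dist y z → dist x (m y z) ≤ R - δ}
      with hC₂def
    have haC₂ : a ∈ C₂ := by
      refine ⟨haC, fun y hy z hz hyz => ?_⟩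
      have h1 := hδ y z (by rw [← hradR a haC]; exact hradge a y hy)
        (by rw [← hradR a haC]; exact hradge a z hz) (by linarith)
      linarith
    have hC₂eq : C₂ = C := by
      refine hCmin C₂ ⟨⟨a, haC₂⟩, ?_, ?_, ?_⟩ (Set.sep_subset _ _)
      · have : C₂ = C ∩ ⋂ y ∈ C, ⋂ z ∈ C, ⋂ (_ : R / 2 ≤ dist y z), {x | dist x (m y z) ≤ R - δ} := by
          ext x
          simp only [hC₂def, Set.mem_sep_iff, Set.mem_inter_iff, Set.mem_iInter,
            Set.mem_setOf_eq]
        rw [this]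
        refine hCcl.inter (isClosed_biInter fun y _ => isClosed_biInter fun z _ =>
          isClosed_iInter fun _ => isClosed_le (continuous_id.dist continuous_const)
            continuous_const)
      · rintro y₁ ⟨hy₁C, hy₁⟩ y₂ ⟨hy₂C, hy₂⟩
        refine ⟨hCconv y₁ hy₁C y₂ hy₂C, fun y hy z hz hyz => ?_⟩
        have h3 := hB y₁ y₂ (m y z) (m y z)
        rw [mid_self hm (m y z)] at h3
        linarith [hy₁ y hy z hz hyz, hy₂ y hy z hz hyz]
      · rintro γ x ⟨hxC, hx⟩
        refine ⟨hCinv γ x hxC, fun y hy z hz hyz => ?_⟩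
        have hy' : γ⁻¹ • y ∈ C := hCinv γ⁻¹ y hy
        have hz' : γ⁻¹ • z ∈ C := hCinv γ⁻¹ z hz
        have hmyz : m y z = γ • m (γ⁻¹ • y) (γ⁻¹ • z) := by
          rw [hequiv, smul_inv_smul, smul_inv_smul]
        have hdyz : R / 2 ≤ dist (γ⁻¹ • y) (γ⁻¹ • z) := by
          rw [hdistγ]; exact hyz
        rw [hmyz, hdistγ γ x]
        exact hx _ hy' _ hz' hdyz
    -- choose a far point
    have hfar : R / 2 < rad a := by rw [hradR a haC]; linarith
    obtain ⟨_, ⟨y₀, hy₀, rfl⟩, hy₀d⟩ :=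
      exists_lt_of_lt_csSup (Set.Nonempty.image _ ⟨a, haC⟩) hfar
    set u := m y₀ a with hudef
    have huC : u ∈ C := hCconv y₀ hy₀ a haC
    have hall : ∀ x ∈ C, dist u x ≤ R - δ := by
      intro x hx
      have hx2 : x ∈ C₂ := hC₂eq ▸ hx
      rw [dist_comm]
      exact hx2.2 y₀ hy₀ a haC (by rw [dist_comm]; linarith)
    have hRδnn : 0 ≤ R - δ := le_trans dist_nonneg (hall a haC)
    have := hradle u (R - δ) hRδnn hall
    rw [hradR u huC] at this
    linarith
  have hpoint : ∀ y ∈ C, y = a := by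
    intro y hy
    have h1 := hradge a y hy
    rw [hradR a haC, hRzero] at h1
    exact (dist_le_zero.mp h1).symm
  refine ⟨a, Set.eq_singleton_iff_unique_mem.mpr ⟨haC, hpoint⟩, fun γ =>
    hpoint (γ • a) (hCinv γ a haC)⟩
end
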